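/- Antichain exchange lemma: let P be a finite poset and d_i, d_j two disjoint antichains. Let A = {x ∈ d_i : ∃ y ∈ d_j, y <_P x} and B = {y ∈ d_j : ∃ x ∈ d_i, y <_P x}. Then d_i' = (d_i \ A) ∪ B and d_j' = (d_j \ B) ∪ A are again disjoint antichains with |d_i'| + |d_j'| = |d_i| + |d_j|. -/

import Mathlib

/-- **Antichain exchange lemma.** Moving the sets `A` and `B` of "high" and "low"
elements between two disjoint antichains produces two disjoint antichains with the
same total size. -/
theorem antichain_exchange {α : Type*} [PartialOrder α]
    (di dj : Set α) (hfi : di.Finite) (hfj : dj.Finite)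
    (hdisj : Disjoint di dj)
    (hai : IsAntichain (· ≤ ·) di) (haj : IsAntichain (· ≤ ·) dj) :
    IsAntichain (· ≤ ·)
        ((di \ {x ∈ di | ∃ y ∈ dj, y < x}) ∪ {y ∈ dj | ∃ x ∈ di, y < x}) ∧
      IsAntichain (· ≤ ·)
        ((dj \ {y ∈ dj | ∃ x ∈ di, y < x}) ∪ {x ∈ di | ∃ y ∈ dj, y < x}) ∧
      Disjoint ((di \ {x ∈ di | ∃ y ∈ dj, y < x}) ∪ {y ∈ dj | ∃ x ∈ di, y < x})
        ((dj \ {y ∈ dj | ∃ x ∈ di, y < x}) ∪ {x ∈ di | ∃ y ∈ dj, y < x}) ∧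
      ((di \ {x ∈ di | ∃ y ∈ dj, y < x}) ∪ {y ∈ dj | ∃ x ∈ di, y < x}).ncard +
          ((dj \ {y ∈ dj | ∃ x ∈ di, y < x}) ∪ {x ∈ di | ∃ y ∈ dj, y < x}).ncard =
        di.ncard + dj.ncard := by
  set A : Set α := {x ∈ di | ∃ y ∈ dj, y < x} with hA
  set B : Set α := {y ∈ dj | ∃ x ∈ di, y < x} with hB
  have hAi : A ⊆ di := fun x hx => hx.1
  have hBj : B ⊆ dj := fun x hx => hx.1
  have hne : ∀ {a b : α}, a ∈ di → b ∈ dj → a ≠ b := by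
    intro a b ha hb h; subst h; exact (hdisj.le_bot ⟨ha, hb⟩ : (_ : Prop))
  constructor
  · rintro a (⟨hai', haA⟩ | haB) b (⟨hbi, hbA⟩ | hbB) hab hle
    · exact hai hai' hbi hab hle
    · -- a ∈ di\A, b ∈ B
      obtain ⟨hbj, x, hx, hbx⟩ := hbB
      exact hai hai' hx (fun h => absurd (h ▸ lt_of_le_of_lt hle hbx) (lt_irrefl _))
        (hle.trans hbx.le)
    · -- a ∈ B, b ∈ di\A
      obtain ⟨haj', x, hx, haxlt⟩ := haB
      exact hbA ⟨hbi, a, haj', lt_of_le_of_ne hle (Ne.symm (hne hbi haj'))⟩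
    · exact haj haB.1 hbB.1 hab hle
  constructor
  · rintro a (⟨haj', haB⟩ | haA) b (⟨hbj, hbB⟩ | hbA) hab hle
    · exact haj haj' hbj hab hle
    · -- a ∈ dj\B, b ∈ A
      exact haB ⟨haj', b, hbA.1, lt_of_le_of_ne hle (Ne.symm (hne hbA.1 haj'))⟩
    · -- a ∈ A, b ∈ dj\B
      obtain ⟨hai', y, hy, hya⟩ := haA
      exact haj hy hbj (fun h => absurd (h ▸ lt_of_lt_of_le hya hle) (lt_irrefl _))
        (hya.le.trans hle)
    · exact hai haA.1 hbA.1 hab hle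
  constructor
  · rw [Set.disjoint_union_left, Set.disjoint_union_right, Set.disjoint_union_right]
    refine ⟨⟨?_, ?_⟩, ?_, ?_⟩
    · exact (hdisj.mono (Set.diff_subset) (Set.diff_subset))
    · exact Set.disjoint_sdiff_left
    · exact Set.disjoint_sdiff_right
    · exact hdisj.symm.mono hBj hAi
  · have hfa : A.Finite := hfi.subset hAi
    have hfb : B.Finite := hfj.subset hBj
    rw [Set.ncard_union_eq (hdisj.symm.mono hBj Set.diff_subset).symm hfi.diff hfb,
      Set.ncard_union_eq (hdisj.mono hAi Set.diff_subset).symm hfj.diff hfa,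
      ← Set.ncard_diff_add_ncard_of_subset hAi hfi,
      ← Set.ncard_diff_add_ncard_of_subset hBj hfj]
    ring
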